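/- Let ι be a finite index type, p : ι → ℕ with each p(i) prime, a : ι → ℕ with each a(i) ≥ 1, and let Z be the product group ∏_{i ∈ ι} ℤ/(p(i)^{a(i)}). Let y ∈ Z and x ∈ ⟨y⟩. Then μ(ord(y) / ord(x)) ≠ 0 if and only if for every i ∈ ι, ord(y_i) divides p(i) · ord(x_i), where μ is the classical Möbius function, ord denotes additive order, and x_i, y_i are the i-th coordinates. (Equivalently: in each coordinate, the additive order of y_i is either ord(x_i) or p(i) · ord(x_i).) -/
import Mathlib

open Finset in
lemma aux_pi_addOrderOf {ι : Type*} [Fintype ι] {M : ι → Type*} [∀ i, AddMonoid (M i)]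
    (y : ∀ i, M i) :
    addOrderOf y = Finset.univ.lcm fun i => addOrderOf (y i) := by
  apply Nat.dvd_antisymm
  · rw [addOrderOf_dvd_iff_nsmul_eq_zero]
    funext i
    have : addOrderOf (y i) ∣ Finset.univ.lcm fun i => addOrderOf (y i) :=
      Finset.dvd_lcm (Finset.mem_univ i)
    simpa using addOrderOf_dvd_iff_nsmul_eq_zero.1 this
  · apply Finset.lcm_dvd
    intro i _
    rw [addOrderOf_dvd_iff_nsmul_eq_zero]
    have h := addOrderOf_nsmul_eq_zero y
    simpa using congrFun h i

lemma aux_lcm_factorization {ι : Type*} (s : Finset ι) (f : ι → ℕ)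
    (hf : ∀ i ∈ s, f i ≠ 0) :
    s.lcm f ≠ 0 ∧ ∀ q, (s.lcm f).factorization q = s.sup fun i => (f i).factorization q := by
  classical
  induction s using Finset.induction with
  | empty => simp
  | @insert a s ha ih =>
    have hfa : f a ≠ 0 := hf a (Finset.mem_insert_self a s)
    obtain ⟨h0, hq⟩ := ih (fun i hi => hf i (Finset.mem_insert_of_mem hi))
    rw [Finset.lcm_insert, lcm_eq_nat_lcm]
    refine ⟨Nat.lcm_ne_zero hfa h0, fun q => ?_⟩
    rw [Finset.sup_insert, Nat.factorization_lcm hfa h0, Finsupp.sup_apply, hq q]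

lemma aux_zsmul_addOrderOf {M : Type*} [AddGroup M] (k : ℤ) (z : M) :
    addOrderOf (k • z) = addOrderOf ((k.natAbs) • z) := by
  obtain ⟨m, h | h⟩ : ∃ m : ℕ, k = m ∨ k = -m := ⟨k.natAbs, Int.natAbs_eq k⟩
  · subst h; rw [natCast_zsmul]; simp
  · subst h
    rw [neg_zsmul, natCast_zsmul, addOrderOf_neg]
    simp

/-- Lemma 3.1: in `Z = ∏ i, ℤ/(p i ^ a i)` with `x ∈ ⟨y⟩`,
`μ(ord y / ord x) ≠ 0` iff in each coordinate `ord (y i)` divides `p i · ord (x i)`. -/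
theorem stmt_7 {ι : Type*} [Fintype ι] (p a : ι → ℕ)
    (hp : ∀ i, (p i).Prime) (ha : ∀ i, 1 ≤ a i)
    (y x : (i : ι) → ZMod (p i ^ a i))
    (hx : x ∈ AddSubgroup.zmultiples y) :
    ArithmeticFunction.moebius (addOrderOf y / addOrderOf x) ≠ 0 ↔
      ∀ i, addOrderOf (y i) ∣ p i * addOrderOf (x i) := by
  classical
  obtain ⟨k, hk⟩ := AddSubgroup.mem_zmultiples_iff.1 hx
  set n : ℕ := k.natAbs with hn
  set N : ι → ℕ := fun i => addOrderOf (y i) with hN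
  set M : ι → ℕ := fun i => addOrderOf (x i) with hM
  have hxk : ∀ i, x i = k • y i := by
    intro i; rw [← hk]; rfl
  -- coordinate orders divide p i ^ a i
  have hNdvd : ∀ i, N i ∣ p i ^ a i := by
    intro i
    rw [addOrderOf_dvd_iff_nsmul_eq_zero, nsmul_eq_mul]
    simp [ZMod.natCast_self]
  have hN0 : ∀ i, N i ≠ 0 := by
    intro i h
    have := hNdvd i
    rw [h] at this
    exact pow_ne_zero (a i) (hp i).ne_zero (zero_dvd_iff.1 this)
  have hMN : ∀ i, M i ∣ N i := by
    intro i
    refine addOrderOf_dvd_of_mem_zmultiples ?_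
    exact AddSubgroup.mem_zmultiples_iff.2 ⟨k, (hxk i).symm⟩
  have hMdvd : ∀ i, M i ∣ p i ^ a i := fun i => (hMN i).trans (hNdvd i)
  have hM0 : ∀ i, M i ≠ 0 := by
    intro i h
    exact hN0 i (zero_dvd_iff.1 (h ▸ hMN i))
  obtain ⟨e, he, hNe⟩ : ∃ e : ι → ℕ, (∀ i, e i ≤ a i) ∧ ∀ i, N i = p i ^ e i := by
    have := fun i => (Nat.dvd_prime_pow (hp i)).1 (hNdvd i)
    choose e h1 h2 using this
    exact ⟨e, h1, h2⟩
  obtain ⟨f, hf, hMe⟩ : ∃ f : ι → ℕ, (∀ i, f i ≤ a i) ∧ ∀ i, M i = p i ^ f i := by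
    have := fun i => (Nat.dvd_prime_pow (hp i)).1 (hMdvd i)
    choose f h1 h2 using this
    exact ⟨f, h1, h2⟩
  have hE : ∀ i q, (N i).factorization q = if p i = q then e i else 0 := by
    intro i q
    rw [hNe i, (hp i).factorization_pow, Finsupp.single_apply]
  have hF : ∀ i q, (M i).factorization q = if p i = q then f i else 0 := by
    intro i q
    rw [hMe i, (hp i).factorization_pow, Finsupp.single_apply]
  -- global orders as lcms
  have hyL : addOrderOf y = Finset.univ.lcm N := aux_pi_addOrderOf y
  have hxL : addOrderOf x = Finset.univ.lcm M := aux_pi_addOrderOf x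
  obtain ⟨hL0, hLq⟩ := aux_lcm_factorization Finset.univ N (fun i _ => hN0 i)
  obtain ⟨hL'0, hL'q⟩ := aux_lcm_factorization Finset.univ M (fun i _ => hM0 i)
  set L : ℕ := Finset.univ.lcm N
  set L' : ℕ := Finset.univ.lcm M
  have hLL' : L' ∣ L := Finset.lcm_dvd fun i _ => (hMN i).trans (Finset.dvd_lcm (Finset.mem_univ i))
  have hdiv0 : L / L' ≠ 0 := by
    intro h
    have := Nat.div_mul_cancel hLL'
    rw [h, zero_mul] at this
    exact hL0 this.symm
  -- reduce LHS to factorization inequality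
  have lhs_iff : ArithmeticFunction.moebius (addOrderOf y / addOrderOf x) ≠ 0 ↔
      ∀ q, L.factorization q ≤ L'.factorization q + 1 := by
    rw [hyL, hxL, ArithmeticFunction.moebius_ne_zero_iff_squarefree,
      Nat.squarefree_iff_factorization_le_one hdiv0]
    constructor
    · intro h q
      have := h q
      rw [Nat.factorization_div hLL', Finsupp.tsub_apply] at this
      omega
    · intro h q
      rw [Nat.factorization_div hLL', Finsupp.tsub_apply]
      have := h q
      omega
  -- reduce RHS to exponent inequality
  have rhs_iff : (∀ i, addOrderOf (y i) ∣ p i * addOrderOf (x i)) ↔ ∀ i, e i ≤ f i + 1 := by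
    apply forall_congr'
    intro i
    rw [show addOrderOf (y i) = N i from rfl, show addOrderOf (x i) = M i from rfl,
      hNe i, hMe i, ← pow_succ' (p i) (f i), Nat.pow_dvd_pow_iff_le_right (hp i).one_lt]
  rw [lhs_iff, rhs_iff]
  -- key relation when n ≠ 0
  have key : n ≠ 0 → ∀ i, f i + min (e i) (n.factorization (p i)) = e i := by
    intro hn0 i
    have hMi : M i = N i / Nat.gcd (N i) n := by
      rw [hM]
      simp only [hxk i, aux_zsmul_addOrderOf]
      rw [addOrderOf_nsmul' (y i) hn0]
    have hg0 : Nat.gcd (N i) n ≠ 0 :=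
      (Nat.gcd_pos_of_pos_left n (Nat.pos_of_ne_zero (hN0 i))).ne'
    have hmul : M i * Nat.gcd (N i) n = N i := by
      rw [hMi]; exact Nat.div_mul_cancel (Nat.gcd_dvd_left _ _)
    have hfact := congrArg (fun m => m.factorization (p i)) hmul
    simp only [Nat.factorization_mul (hM0 i) hg0, Finsupp.add_apply] at hfact
    rw [Nat.factorization_gcd (hN0 i) hn0, Finsupp.inf_apply] at hfact
    have hNi : (N i).factorization (p i) = e i := by rw [hE]; simp
    have hMi' : (M i).factorization (p i) = f i := by rw [hF]; simp
    rw [hNi, hMi'] at hfact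
    simpa using hfact
  constructor
  · intro H i
    by_cases hei : e i ≤ 1
    · omega
    by_cases hn0 : n = 0
    · -- x = 0, so all M j = 1, L' = 1
      have hk0 : k = 0 := Int.natAbs_eq_zero.1 hn0
      have hMj : ∀ j, f j = 0 := by
        intro j
        have hM1 : M j = 1 := by
          show addOrderOf (x j) = 1
          rw [hxk j, hk0, zero_zsmul]
          exact addOrderOf_zero
        have hpow : p j ^ f j = 1 := (hMe j).symm.trans hM1
        by_contra h
        have := Nat.one_lt_pow h (hp j).one_lt
        omega
      -- e i ≤ L.factorization (p i) ≤ L'.factorization (p i) + 1 = 1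
      have h1 : e i ≤ L.factorization (p i) := by
        rw [hLq]
        have h := Finset.le_sup (f := fun j => (N j).factorization (p i)) (Finset.mem_univ i)
        simpa [hE] using h
      have h2 : L'.factorization (p i) = 0 := by
        rw [hL'q]
        refine Nat.le_antisymm (Finset.sup_le fun j _ => ?_) (Nat.zero_le _)
        rw [hF]
        simp [hMj j]
      have := H (p i)
      omega
    · have hkey := key hn0
      suffices hvle : n.factorization (p i) ≤ 1 by
        have := hkey i
        omega
      by_contra hv2
      push_neg at hv2
      have hS : e i ≤ L.factorization (p i) := by
        rw [hLq]
        have h := Finset.le_sup (f := fun j => (N j).factorization (p i)) (Finset.mem_univ i)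
        simpa [hE] using h
      have hsup : L'.factorization (p i) ≤ L.factorization (p i) - 2 := by
        rw [hL'q]
        apply Finset.sup_le
        intro j _
        rw [hF]
        by_cases hpj : p j = p i
        · rw [if_pos hpj]
          have hkj := hkey j
          rw [hpj] at hkj
          have hej : e j ≤ L.factorization (p i) := by
            rw [hLq]
            have h := Finset.le_sup (f := fun j' => (N j').factorization (p i)) (Finset.mem_univ j)
            simpa [hE, hpj] using h
          omega
        · rw [if_neg hpj]
          exact Nat.zero_le _
      have := H (p i)
      omega
  · intro H q
    rw [hLq, hL'q]
    apply Finset.sup_le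
    intro j _
    rw [hE]
    by_cases hpj : p j = q
    · rw [if_pos hpj]
      have hfj : f j ≤ Finset.univ.sup fun i => (M i).factorization q := by
        have h := Finset.le_sup (f := fun i => (M i).factorization q) (Finset.mem_univ j)
        simpa [hF, hpj] using h
      have := H j
      omega
    · rw [if_neg hpj]
      exact Nat.zero_le _
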